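/- Consider f(x, y) = −x y e^{−x²−y²} + (1/2) y² on ℝ², the feasible set K = {(x, y) ∈ ℝ² : x + y ≤ 0}, and the projected gradient descent map T(p) = P_K(p − ᾱ∇f(p)) with constant step size 0 < ᾱ < 2/3. Then there exists ε > 0 such that for every initial point (x₀, y₀) in the set B_ε = {(x, y) : 0.5 − ε ≤ x ≤ 0.5 and −0.5 − ε ≤ y ≤ −0.5}, the projected gradient descent sequence (x_{k+1}, y_{k+1}) = T(x_k, y_k) converges to the origin (0, 0). -/

import Mathlib

/-- The objective `f(x, y) = −x y e^{−x²−y²} + (1/2) y²`. -/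
noncomputable def fObj (p : ℝ × ℝ) : ℝ :=
  -(p.1 * p.2) * Real.exp (-p.1 ^ 2 - p.2 ^ 2) + p.2 ^ 2 / 2

/-- The gradient `∇f(x, y)` of the objective `fObj`. -/
noncomputable def gradF (p : ℝ × ℝ) : ℝ × ℝ :=
  (-(1 - 2 * p.1 ^ 2) * p.2 * Real.exp (-p.1 ^ 2 - p.2 ^ 2),
   -(1 - 2 * p.2 ^ 2) * p.1 * Real.exp (-p.1 ^ 2 - p.2 ^ 2) + p.2)

/-- Euclidean metric projection onto the half-plane `K = {(x, y) : x + y ≤ 0}`. -/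
noncomputable def projK (q : ℝ × ℝ) : ℝ × ℝ :=
  if q.1 + q.2 ≤ 0 then q else (q.1 - (q.1 + q.2) / 2, q.2 - (q.1 + q.2) / 2)

/-- One step of projected gradient descent with step size `a`: `T(p) = P_K(p − a ∇f(p))`. -/
noncomputable def Tmap (a : ℝ) (p : ℝ × ℝ) : ℝ × ℝ :=
  projK (p - a • gradF p)

set_option maxHeartbeats 1000000

noncomputable def hFun (x : ℝ) : ℝ := (1 - 2 * x ^ 2) * Real.exp (-(2 * x ^ 2)) + 1 / 2

lemma hFun_lb (x : ℝ) (h0 : 0 ≤ x) (h1 : x ≤ 3 / 5) : 1 / 2 ≤ hFun x := by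
  have h2 : (0:ℝ) ≤ 1 - 2 * x ^ 2 := by nlinarith
  have hE : (0:ℝ) < Real.exp (-(2 * x ^ 2)) := Real.exp_pos _
  have := mul_nonneg h2 hE.le
  unfold hFun; linarith

lemma hFun_ub (x : ℝ) (h0 : 0 ≤ x) (h1 : x ≤ 3 / 5) : hFun x ≤ 3 / 2 := by
  have h2 : (0:ℝ) ≤ 1 - 2 * x ^ 2 := by nlinarith
  have hE : Real.exp (-(2 * x ^ 2)) ≤ 1 := Real.exp_le_one_iff.mpr (by nlinarith [sq_nonneg x])
  have hE0 : (0:ℝ) < Real.exp (-(2 * x ^ 2)) := Real.exp_pos _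
  unfold hFun; nlinarith

lemma step_on_line (a x : ℝ) (ha : 0 < a) (hx : 0 < x) :
    Tmap a (x, -x) = (x * (1 - a * hFun x), -(x * (1 - a * hFun x))) := by
  simp only [Tmap, gradF, projK, Prod.mk_sub_mk, Prod.smul_mk, smul_eq_mul, hFun]
  have hE : -x ^ 2 - (-x) ^ 2 = -(2 * x ^ 2) := by ring
  simp only [hE]; rw [if_neg]
  · simp only [Prod.mk.injEq]; constructor <;> ring
  · push_neg
    have : x - a * (-(1 - 2 * x ^ 2) * -x * Real.exp (-(2 * x ^ 2))) +
        (-x - a * (-(1 - 2 * (-x) ^ 2) * x * Real.exp (-(2 * x ^ 2)) + -x)) = a * x := by ring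
    rw [this]
    positivity

lemma contraction (a x : ℝ) (ha0 : 0 < a) (ha : a < 2 / 3) (hx : 0 < x) (hx6 : x ≤ 3 / 5) :
    0 < x * (1 - a * hFun x) ∧ x * (1 - a * hFun x) ≤ (1 - a / 2) * x := by
  have h1 := hFun_lb x hx.le hx6
  have h2 := hFun_ub x hx.le hx6
  constructor
  · have : a * hFun x < 1 := by nlinarith
    nlinarith
  · nlinarith [mul_nonneg hx.le (mul_nonneg ha0.le (by linarith : (0:ℝ) ≤ hFun x - 1/2))]

lemma first_step (a x0 y0 : ℝ) (ha0 : 0 < a) (ha : a < 2 / 3)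
    (hε1 : min (1/10) (a/50) ≤ 1/10) (hε2 : min (1/10) (a/50) ≤ a/50)
    (hx0l : 1/2 - min (1/10) (a/50) ≤ x0) (hx0u : x0 ≤ 1/2)
    (hy0l : -(1/2) - min (1/10) (a/50) ≤ y0) (hy0u : y0 ≤ -(1/2)) :
    ∃ w, Tmap a (x0, y0) = (w, -w) ∧ 0 < w ∧ w ≤ 3 / 5 := by
  have hεpos : 0 < min (1/10 : ℝ) (a/50) := lt_min (by norm_num) (by linarith)
  have hx0l' : (2:ℝ)/5 ≤ x0 := by linarith
  have hy0l' : -(3:ℝ)/5 ≤ y0 := by linarith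
  have hE0 : 0 < Real.exp (-x0 ^ 2 - y0 ^ 2) := Real.exp_pos _
  have hE1 : Real.exp (-x0 ^ 2 - y0 ^ 2) ≤ 1 :=
    Real.exp_le_one_iff.mpr (by nlinarith [sq_nonneg x0, sq_nonneg y0])
  set ε := min (1/10 : ℝ) (a/50) with hεdef
  set E := Real.exp (-x0 ^ 2 - y0 ^ 2) with hEdef
  set g1 := -(1 - 2 * x0 ^ 2) * y0 * E with hg1def
  set g2 := -(1 - 2 * y0 ^ 2) * x0 * E + y0 with hg2def
  clear_value ε E g1 g2
  have hu1 : (1:ℝ)/2 ≤ 1 - 2 * x0 ^ 2 := by nlinarith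
  have hu2 : 1 - 2 * x0 ^ 2 ≤ 17/25 := by nlinarith
  have hv1 : (1:ℝ)/2 ≤ -y0 := by linarith
  have hv2 : -y0 ≤ 3/5 := by linarith
  have huv : (1 - 2 * x0 ^ 2) * (-y0) ≤ 51/125 := by nlinarith
  have huv0 : 0 ≤ (1 - 2 * x0 ^ 2) * (-y0) := by nlinarith
  have hg1a : 0 ≤ g1 := by rw [hg1def]; nlinarith [mul_nonneg huv0 hE0.le]
  have hg1b : g1 ≤ 51/125 := by
    rw [hg1def]
    nlinarith [mul_le_mul huv hE1 hE0.le (by norm_num : (0:ℝ) ≤ 51/125)]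
  have hw1 : (7:ℝ)/25 ≤ 1 - 2 * y0 ^ 2 := by nlinarith
  have hw2 : 1 - 2 * y0 ^ 2 ≤ 1/2 := by nlinarith
  have hwx : (1 - 2 * y0 ^ 2) * x0 ≤ 1/4 := by nlinarith
  have hwx0 : 0 ≤ (1 - 2 * y0 ^ 2) * x0 := by nlinarith
  have ht1 : 0 ≤ (1 - 2 * y0 ^ 2) * x0 * E := mul_nonneg hwx0 hE0.le
  have ht2 : (1 - 2 * y0 ^ 2) * x0 * E ≤ 1/4 := by
    nlinarith [mul_le_mul hwx hE1 hE0.le (by norm_num : (0:ℝ) ≤ 1/4)]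
  have hg2a : -(17:ℝ)/20 ≤ g2 := by rw [hg2def]; linarith
  have hg2b : g2 ≤ -(1:ℝ)/2 := by rw [hg2def]; linarith
  have hsum : g1 + g2 ≤ -23/250 := by linarith
  have hasum : a * (g1 + g2) ≤ a * (-23/250) := mul_le_mul_of_nonneg_left hsum ha0.le
  have hdiff0 : 0 ≤ g1 - g2 := by linarith
  have hdiff : g1 - g2 ≤ 629/500 := by linarith
  have hadiff : a * (g1 - g2) ≤ (2/3) * (629/500) := by
    have := mul_le_mul ha.le hdiff hdiff0 (by norm_num : (0:ℝ) ≤ 2/3)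
    linarith
  have hadiff0 : 0 ≤ a * (g1 - g2) := mul_nonneg ha0.le hdiff0
  refine ⟨(x0 - y0) / 2 - a * (g1 - g2) / 2, ?_, ?_, ?_⟩
  · simp only [Tmap, gradF, projK, Prod.mk_sub_mk, Prod.smul_mk, smul_eq_mul,
      ← hEdef, ← hg1def, ← hg2def]
    rw [if_neg]
    · simp only [Prod.mk.injEq]
      constructor <;> ring
    · push_neg
      have hq : x0 - a * g1 + (y0 - a * g2) = (x0 + y0) - a * (g1 + g2) := by ring
      rw [hq]
      have h2ε : -2 * ε ≤ x0 + y0 := by linarith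
      nlinarith
  · linarith
  · linarith

theorem stmt_6 (a : ℝ) (ha0 : 0 < a) (ha : a < 2 / 3) :
    ∃ ε > (0 : ℝ), ∀ z : ℕ → ℝ × ℝ,
      0.5 - ε ≤ (z 0).1 → (z 0).1 ≤ 0.5 →
      -0.5 - ε ≤ (z 0).2 → (z 0).2 ≤ -0.5 →
      (∀ k, z (k + 1) = Tmap a (z k)) →
      Filter.Tendsto z Filter.atTop (nhds ((0 : ℝ), (0 : ℝ))) := by
  refine ⟨min (1/10) (a/50), lt_min (by norm_num) (by linarith), ?_⟩
  intro z h1 h2 h3 h4 hrec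
  have h05 : (0.5 : ℝ) = 1/2 := by norm_num
  obtain ⟨w, hw, hw0, hw6⟩ := first_step a (z 0).1 (z 0).2 ha0 ha
    (min_le_left _ _) (min_le_right _ _)
    (by rw [h05] at h1; linarith) (by rw [h05] at h2; linarith)
    (by rw [show (-0.5 : ℝ) = -(1/2) by norm_num] at h3; linarith)
    (by rw [show (-0.5 : ℝ) = -(1/2) by norm_num] at h4; linarith)
  have hz1 : z 1 = (w, -w) := by rw [hrec 0, ← hw]
  have hr0 : (0:ℝ) ≤ 1 - a / 2 := by linarith
  have hr1 : 1 - a / 2 < 1 := by linarith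
  have claim : ∀ k : ℕ, ∃ v : ℝ, 0 < v ∧ v ≤ 3/5 ∧ z (k+1) = (v, -v) ∧
      v ≤ (1 - a/2)^k * (3/5) := by
    intro k
    induction k with
    | zero => exact ⟨w, hw0, hw6, hz1, by norm_num [hw6]⟩
    | succ n ih =>
      obtain ⟨v, hv0, hv6, hzv, hvb⟩ := ih
      obtain ⟨hc1, hc2⟩ := contraction a v ha0 ha hv0 hv6
      refine ⟨v * (1 - a * hFun v), hc1, ?_, ?_, ?_⟩
      · nlinarith
      · rw [hrec (n+1), hzv, step_on_line a v ha0 hv0]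
      · have : (1 - a/2) * v ≤ (1 - a/2) * ((1 - a/2)^n * (3/5)) :=
          mul_le_mul_of_nonneg_left hvb hr0
        calc v * (1 - a * hFun v) ≤ (1 - a/2) * v := hc2
          _ ≤ (1 - a/2) * ((1 - a/2)^n * (3/5)) := this
          _ = (1 - a/2)^(n+1) * (3/5) := by ring
  choose v hv0 hv6 hzv hvb using claim
  have hgeo : Filter.Tendsto (fun k : ℕ => (1 - a/2)^k * (3/5)) Filter.atTop (nhds 0) := by
    have := (tendsto_pow_atTop_nhds_zero_of_lt_one hr0 hr1).mul_const (3/5 : ℝ)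
    simpa using this
  have hvlim : Filter.Tendsto v Filter.atTop (nhds 0) :=
    squeeze_zero (fun k => (hv0 k).le) hvb hgeo
  have hshift : Filter.Tendsto (fun k : ℕ => z (k + 1)) Filter.atTop
      (nhds ((0:ℝ), (0:ℝ))) := by
    have : (fun k : ℕ => z (k + 1)) = fun k : ℕ => (v k, -(v k)) := funext hzv
    rw [this]
    exact (hvlim.prodMk_nhds (by simpa using hvlim.neg))
  exact (Filter.tendsto_add_atTop_iff_nat 1).mp hshift
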